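/- arXiv:2305.00963 — 8 statements merged into one kernel-verified Lean document; each statement's English description precedes it below -/
import Mathlib

section
/- Let w₁, …, w_m be real numbers (left endpoints of unit intervals) and consider a chain of relations w₁ ◁ w₂ ◁ ⋯ ◁ w_m where each ◁ is either ≺ (meaning w_i + 1 ≤ w_{i+1}) or → (meaning w_i < w_{i+1} + 1). If the number r of ≺-symbols and the number s of →-symbols satisfy r ≥ s, then the chain cannot hold (such a sequence is impossible). -/
/-- A cyclic chain of relations `w₁ ◁ w₂ ◁ ⋯ ◁ w_m ◁ w₁`, where each `◁` is either
`≺` (`w i + 1 ≤ w (i+1)`, recorded by `rel i = true`) or `→` (`w i < w (i+1) + 1`,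
recorded by `rel i = false`), is impossible whenever the number `r` of `≺`-symbols
is at least the number `s` of `→`-symbols.  The sequence is encoded as a
`m`-periodic function `w : ℕ → ℝ`. -/
theorem impossible_cyclic_chain (m : ℕ) (hm : 0 < m) (w : ℕ → ℝ)
    (hper : ∀ i, w (i + m) = w i) (rel : ℕ → Bool)
    (hchain : ∀ i < m, if rel i then w i + 1 ≤ w (i + 1) else w i < w (i + 1) + 1)
    (hcount : ((Finset.range m).filter (fun i => rel i = false)).card ≤
      ((Finset.range m).filter (fun i => rel i = true)).card) :
    False := by
  set f : ℕ → ℝ := fun i => w (i + 1) - w i with hf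
  have hsum0 : ∑ i ∈ Finset.range m, f i = 0 := by
    rw [Finset.sum_range_sub]
    have := hper 0
    simp at this
    simp [this]
  set T := (Finset.range m).filter (fun i => rel i = true) with hT
  set F := (Finset.range m).filter (fun i => rel i = false) with hF
  have hsplit : ∑ i ∈ T, f i + ∑ i ∈ F, f i = ∑ i ∈ Finset.range m, f i := by
    have h := Finset.sum_filter_add_sum_filter_not (Finset.range m)
      (fun i => rel i = true) f
    simpa [hT, hF, Bool.not_eq_true] using h
  have hTsum : (T.card : ℝ) ≤ ∑ i ∈ T, f i := by
    have : ∀ i ∈ T, (1:ℝ) ≤ f i := by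
      intro i hi
      rw [hT, Finset.mem_filter, Finset.mem_range] at hi
      have := hchain i hi.1
      rw [hi.2] at this
      simp at this
      simp [hf]; linarith
    calc (T.card : ℝ) = ∑ _i ∈ T, (1:ℝ) := by simp
      _ ≤ ∑ i ∈ T, f i := Finset.sum_le_sum this
  have hFsum : ∀ i ∈ F, (-1:ℝ) < f i := by
    intro i hi
    rw [hF, Finset.mem_filter, Finset.mem_range] at hi
    have := hchain i hi.1
    rw [hi.2] at this
    simp at this
    simp [hf]; linarith
  have hcards : T.card + F.card = m := by
    have h := Finset.card_filter_add_card_filter_not (s := Finset.range m)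
      (p := fun i => rel i = true)
    simpa [hT, hF, Bool.not_eq_true] using h
  rcases F.eq_empty_or_nonempty with hFe | hFne
  · have : ∑ i ∈ F, f i = 0 := by rw [hFe]; simp
    have hFc : F.card = 0 := by rw [hFe]; simp
    have hTm : T.card = m := by omega
    have hmr : (0:ℝ) < m := by exact_mod_cast hm
    have hc : (T.card : ℝ) = m := by rw [hTm]
    have hz := hsplit.trans hsum0
    linarith
  · have hstrict : ∑ i ∈ F, (-1:ℝ) < ∑ i ∈ F, f i :=
      Finset.sum_lt_sum_of_nonempty hFne hFsum
    have hneg : ∑ i ∈ F, (-1:ℝ) = -(F.card : ℝ) := by simp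
    have hcard : (F.card : ℝ) ≤ (T.card : ℝ) := by exact_mod_cast hcount
    rw [hneg] at hstrict
    have := hsplit.trans hsum0
    linarith
end

section
/- Let w be an N-Escher in a UIO U with N = n + k (indices mod N, k ≥ 1, n ≥ 1). Then for any index m, it is impossible that both w_{m+k} ≻ w_{m+1} and w_m ≻ w_{m+k+1} hold. Hence exactly one of the following holds: (1) w_{m+k} → w_{m+1} and w_m → w_{m+k+1}; (2) w_{m+k} ≻ w_{m+1} and w_m → w_{m+k+1}; (3) w_{m+k} → w_{m+1} and w_m ≻ w_{m+k+1}. -/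
/-- An `m`-Escher in a UIO `U` (a finite set of reals, viewed as left endpoints of unit
intervals), encoded as an `m`-periodic sequence `w : ℕ → ℝ` of elements of `U`, pairwise
distinct within a period, with `w i → w (i+1)` (i.e. `w i < w (i+1) + 1`) for all `i`. -/
def IsEscher (U : Finset ℝ) (m : ℕ) (w : ℕ → ℝ) : Prop :=
  (∀ i, w (i + m) = w i) ∧ (∀ i, w i ∈ U) ∧
  (∀ i j, i < m → j < m → w i = w j → i = j) ∧ (∀ i, w i < w (i + 1) + 1)

/-- For an `(n+k)`-Escher `w` and any index `m`, it is impossible that both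
`w (m+k) ≻ w (m+1)` and `w m ≻ w (m+k+1)`; hence exactly one of the three cases
(1) `w (m+k) → w (m+1)` and `w m → w (m+k+1)`,
(2) `w (m+k) ≻ w (m+1)` and `w m → w (m+k+1)`,
(3) `w (m+k) → w (m+1)` and `w m ≻ w (m+k+1)` holds. -/
theorem escher_trichotomy (U : Finset ℝ) (n k : ℕ) (hn : 1 ≤ n) (hk : 1 ≤ k)
    (w : ℕ → ℝ) (hw : IsEscher U (n + k) w) (m : ℕ) :
    ¬(w (m + 1) + 1 ≤ w (m + k) ∧ w (m + k + 1) + 1 ≤ w m) ∧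
    ((w (m + k) < w (m + 1) + 1 ∧ w m < w (m + k + 1) + 1) ∨
     (w (m + 1) + 1 ≤ w (m + k) ∧ w m < w (m + k + 1) + 1) ∨
     (w (m + k) < w (m + 1) + 1 ∧ w (m + k + 1) + 1 ≤ w m)) := by
  obtain ⟨-, -, -, h4⟩ := hw
  have ha := h4 m
  have hb := h4 (m + k)
  constructor
  · rintro ⟨h1, h2⟩; linarith
  · rcases lt_or_ge (w (m + k)) (w (m + 1) + 1) with h | h
    · rcases lt_or_ge (w m) (w (m + k + 1) + 1) with h' | h'
      · exact Or.inl ⟨h, h'⟩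
      · exact Or.inr (Or.inr ⟨h, h'⟩)
    · rcases lt_or_ge (w m) (w (m + k + 1) + 1) with h' | h'
      · exact Or.inr (Or.inl ⟨h, h'⟩)
      · exact absurd h' (by linarith)
end

section
/- Every (n+k)-Escher w in a UIO has a valid k-subEscher: there exists an index i (mod n+k) such that [w_{i+1}, …, w_{i+k}] is a k-Escher and [w_{i+k+1}, …, w_i] is an n-Escher. -/
/-- Every `(n+k)`-Escher has a valid `k`-subEscher: there is an index `i` with
`w (i+k) → w (i+1)` (so `[w (i+1), …, w (i+k)]` is a `k`-Escher) and
`w i → w (i+k+1)` (so the complementary window `[w (i+k+1), …, w i]` is an `n`-Escher). -/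
theorem exists_valid_subEscher (U : Finset ℝ) (n k : ℕ) (hn : 1 ≤ n) (hk : 1 ≤ k)
    (w : ℕ → ℝ) (hw : IsEscher U (n + k) w) :
    ∃ i, w (i + k) < w (i + 1) + 1 ∧ w i < w (i + k + 1) + 1 := by
  obtain ⟨hper, hmem, hinj, hstep⟩ := hw
  by_contra hcon
  push_neg at hcon
  set N := n + k with hN
  have hNpos : 0 < N := by omega
  -- The key disjunction obtained from the negated goal
  have hdisj : ∀ i, w i < w (i + k) ∨ w (i + 1 + k) < w (i + 1) := by
    intro i
    rcases lt_or_ge (w (i + k)) (w (i + 1) + 1) with h | h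
    · right
      have h2 := hcon i h
      have h3 := hstep i
      have e : i + 1 + k = i + k + 1 := by ring
      rw [e]
      linarith
    · left
      have h3 := hstep i
      linarith
  -- shifting the starting point of a full-period sum does not change it
  have hsum_shift : ∀ a : ℕ, ∑ t ∈ Finset.range N, w (a + 1 + t)
      = ∑ t ∈ Finset.range N, w (a + t) := by
    intro a
    have h1 : ∑ t ∈ Finset.range N, w (a + 1 + t)
        = ∑ t ∈ Finset.range N, w (a + (t + 1)) :=
      Finset.sum_congr rfl (fun t _ => by ring_nf)
    have h2 : ∑ t ∈ Finset.range (N + 1), w (a + t)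
        = ∑ t ∈ Finset.range N, w (a + (t + 1)) + w (a + 0) :=
      Finset.sum_range_succ' _ _
    have h3 : ∑ t ∈ Finset.range (N + 1), w (a + t)
        = ∑ t ∈ Finset.range N, w (a + t) + w (a + N) :=
      Finset.sum_range_succ _ _
    have h4 : w (a + N) = w (a + 0) := by
      rw [hper a]
      norm_num
    rw [h1]
    linarith [h2, h3, h4]
  have hsum_const : ∀ a : ℕ, ∑ t ∈ Finset.range N, w (a + t)
      = ∑ t ∈ Finset.range N, w t := by
    intro a
    induction a with
    | zero => simp
    | succ b ih => rw [← ih]; exact hsum_shift b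
  have hzero : ∀ a : ℕ, ∑ t ∈ Finset.range N, (w (a + t + k) - w (a + t)) = 0 := by
    intro a
    rw [Finset.sum_sub_distrib]
    have h1 : ∑ t ∈ Finset.range N, w (a + t + k)
        = ∑ t ∈ Finset.range N, w ((a + k) + t) :=
      Finset.sum_congr rfl (fun t _ => by ring_nf)
    rw [h1, hsum_const, hsum_const a]
    ring
  -- there is some index where w decreases over a k-jump
  have hex : ∃ i, w (i + k) < w i := by
    by_contra hno
    push_neg at hno
    have hpos : ∀ i, w i < w (i + k) := by
      intro i
      rcases hdisj i with h | h
      · exact h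
      · exact absurd h (not_lt.mpr (hno (i + 1)))
    have hz := hzero 0
    have hgt : 0 < ∑ t ∈ Finset.range N, (w (0 + t + k) - w (0 + t)) :=
      Finset.sum_pos (fun t _ => by have := hpos (0 + t); linarith)
        ⟨0, Finset.mem_range.mpr hNpos⟩
    linarith
  obtain ⟨i₀, hi₀⟩ := hex
  -- once it decreases, it decreases forever
  have hall : ∀ t : ℕ, w (i₀ + t + k) < w (i₀ + t) := by
    intro t
    induction t with
    | zero => simpa using hi₀
    | succ s ih =>
      rcases hdisj (i₀ + s) with h | h
      · linarith
      · have e : i₀ + s + 1 = i₀ + (s + 1) := by ring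
        rw [e] at h
        exact h
  have hneg : ∑ t ∈ Finset.range N, (w (i₀ + t + k) - w (i₀ + t)) < 0 :=
    Finset.sum_neg (fun t _ => by have := hall t; linarith)
      ⟨0, Finset.mem_range.mpr hNpos⟩
  have hz := hzero i₀
  linarith
end

section
/- There is no infinite sequence of reals x₀ ≺ x₁ ≺ x₂ ≺ ⋯ with all x_i lying in a fixed finite set; in particular, a cyclic pure⁻ sequence of length N = n + k in a UIO leads to a contradiction, since it produces an impossible cyclic chain with q occurrences of ≺ and q occurrences of →. -/
lemma chain_part (S : Finset ℝ) (x : ℕ → ℝ) (hmem : ∀ i, x i ∈ S)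
    (hstep : ∀ i, x i + 1 ≤ x (i + 1)) : False := by
  have hmono : StrictMono x :=
    strictMono_nat_of_lt_succ fun n => lt_of_lt_of_le (lt_add_one _) (hstep n)
  have hinj : Function.Injective x := hmono.injective
  have h1 : Set.range x ⊆ (S : Set ℝ) := by
    rintro _ ⟨i, rfl⟩; exact hmem i
  exact (Set.infinite_range_of_injective hinj) (S.finite_toSet.subset h1)

lemma periodic_mod (N : ℕ) (hN : 0 < N) (w : ℕ → ℝ) (hper : ∀ i, w (i + N) = w i) :
    ∀ i, w i = w (i % N) := by
  intro i
  induction i using Nat.strong_induction_on with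
  | _ i ih =>
    by_cases h : i < N
    · rw [Nat.mod_eq_of_lt h]
    · push_neg at h
      have : i = (i - N) + N := by omega
      rw [this, hper, ih (i - N) (by omega)]
      congr 1
      exact (Nat.add_mod_right _ _).symm

/-- (a) There is no infinite chain `x₀ ≺ x₁ ≺ x₂ ≺ ⋯` (`x i + 1 ≤ x (i+1)`) of reals
all lying in a fixed finite set.  (b) In particular, no cyclic sequence of length
`N = n + k` in a UIO (encoded as an `N`-periodic sequence with consecutive
`→`-relations) can be pure⁻, i.e. satisfy `w (m+1) ≺ w (m+k)` for all `m`. -/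
theorem no_infinite_prec_chain :
    (∀ (S : Finset ℝ) (x : ℕ → ℝ), (∀ i, x i ∈ S) → (∀ i, x i + 1 ≤ x (i + 1)) → False) ∧
    (∀ n k : ℕ, 1 ≤ n → 1 ≤ k → ∀ w : ℕ → ℝ,
      (∀ i, w (i + (n + k)) = w i) → (∀ i, w i < w (i + 1) + 1) →
      (∀ m, w (m + 1) + 1 ≤ w (m + k)) → False) := by
  constructor
  · exact chain_part
  · intro n k hn hk w hper _ hpure
    rcases eq_or_lt_of_le hk with hk1 | hk2
    · have := hpure 0
      simp [← hk1] at this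
      linarith
    · set N := n + k with hN
      have hNpos : 0 < N := by omega
      have hmod := periodic_mod N hNpos w hper
      apply chain_part ((Finset.range N).image w) (fun j => w (1 + j * (k - 1)))
      · intro j
        have := hmod (1 + j * (k - 1))
        rw [this]
        exact Finset.mem_image.2 ⟨_, Finset.mem_range.2 (Nat.mod_lt _ hNpos), rfl⟩
      · intro j
        have h := hpure (j * (k - 1))
        have e1 : j * (k - 1) + 1 = 1 + j * (k - 1) := by ring
        have e2 : j * (k - 1) + k = 1 + (j + 1) * (k - 1) := by
          have : k - 1 + 1 = k := by omega
          cases Nat.exists_eq_add_of_lt hk2 with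
          | intro c hc => subst hc; ring_nf; omega
        rw [e1, e2] at h
        exact h
end

section
/- Let u be an n-Escher and v a k-Escher in a UIO, with indices read cyclically. For each index i, it is impossible that both u_i ≻ v_{i+1} and v_i ≻ u_{i+1}; hence exactly one of: (1) u_i → v_{i+1} and v_i → u_{i+1}; (2) u_i ≻ v_{i+1} and v_i → u_{i+1}; (3) u_i → v_{i+1} and v_i ≻ u_{i+1}. -/
/-- For an `n`-Escher `u` and a `k`-Escher `v` in a UIO and any index `i`, it is
impossible that both `u i ≻ v (i+1)` and `v i ≻ u (i+1)`; hence exactly one of: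
(1) `u i → v (i+1)` and `v i → u (i+1)`; (2) `u i ≻ v (i+1)` and `v i → u (i+1)`;
(3) `u i → v (i+1)` and `v i ≻ u (i+1)`. -/
theorem insertion_trichotomy (U : Finset ℝ) (n k : ℕ) (hn : 1 ≤ n) (hk : 1 ≤ k)
    (u v : ℕ → ℝ) (hu : IsEscher U n u) (hv : IsEscher U k v) (i : ℕ) :
    ¬(v (i + 1) + 1 ≤ u i ∧ u (i + 1) + 1 ≤ v i) ∧
    ((u i < v (i + 1) + 1 ∧ v i < u (i + 1) + 1) ∨
     (v (i + 1) + 1 ≤ u i ∧ v i < u (i + 1) + 1) ∨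
     (u i < v (i + 1) + 1 ∧ u (i + 1) + 1 ≤ v i)) := by
  have hu4 := hu.2.2.2 i
  have hv4 := hv.2.2.2 i
  constructor
  · rintro ⟨h1, h2⟩; linarith
  · rcases lt_or_ge (u i) (v (i + 1) + 1) with h1 | h1 <;>
      rcases lt_or_ge (v i) (u (i + 1) + 1) with h2 | h2
    · exact Or.inl ⟨h1, h2⟩
    · exact Or.inr (Or.inr ⟨h1, h2⟩)
    · exact Or.inr (Or.inl ⟨h1, h2⟩)
    · linarith
end

section
/- Conversely, if w is an (n+k)-Escher and i is an index such that [w_{i+1},…,w_{i+k}] is a valid k-subEscher (i.e., w_{i+k} → w_{i+1} and w_i → w_{i+k+1}), then setting v = [w_{i+1},…,w_{i+k}] and u = [w_{i+k+1},…,w_i], the pair (u, v) has a valid insertion that splices back to w. -/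
lemma mod_pred_of_succ_mod {n j : ℕ} (hn : 1 ≤ n) (h : (j + 1) % n = 0) :
    j % n = n - 1 := by
  have h0 : (j % n + 1) % n = 0 := by rw [Nat.mod_add_mod]; exact h
  have hlt : j % n < n := Nat.mod_lt _ (by omega)
  rcases Nat.lt_or_ge (j % n + 1) n with h1 | h1
  · rw [Nat.mod_eq_of_lt h1] at h0; omega
  · omega

lemma aux_escher {U : Finset ℝ} {w : ℕ → ℝ} {c p : ℕ} (hp : 1 ≤ p)
    (hmem : ∀ i, w i ∈ U) (harr : ∀ i, w i < w (i + 1) + 1)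
    (hwrap : w (c + (p - 1)) < w c + 1)
    (hinj : ∀ a b, a < p → b < p → w (c + a) = w (c + b) → a = b)
    (x : ℕ → ℝ) (hx : ∀ j, x j = w (c + j % p)) : IsEscher U p x := by
  refine ⟨fun j => by rw [hx, hx, Nat.add_mod_right],
          fun j => by rw [hx]; exact hmem _, ?_, ?_⟩
  · intro a b ha hb hab
    rw [hx, hx, Nat.mod_eq_of_lt ha, Nat.mod_eq_of_lt hb] at hab
    exact hinj a b ha hb hab
  · intro j
    rw [hx, hx]
    have hlt : j % p < p := Nat.mod_lt _ (by omega)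
    rcases Nat.lt_or_ge (j % p + 1) p with h | h
    · have h1 : (j + 1) % p = j % p + 1 := by
        rw [← Nat.mod_add_mod, Nat.mod_eq_of_lt h]
      rw [h1, show c + (j % p + 1) = c + j % p + 1 from by omega]
      exact harr _
    · have hjp : j % p = p - 1 := by omega
      have h1 : (j + 1) % p = 0 := by
        rw [← Nat.mod_add_mod, hjp, Nat.sub_add_cancel hp, Nat.mod_self]
      rw [h1, hjp]
      simpa using hwrap

/-- If `w` is an `(n+k)`-Escher and `[w (i+1), …, w (i+k)]` is a valid `k`-subEscher
(`w (i+k) → w (i+1)` and `w i → w (i+k+1)`), then `v = [w (i+1), …, w (i+k)]` is a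
`k`-Escher, `u = [w (i+k+1), …, w i]` is an `n`-Escher, and the pair `(u, v)` has a
valid insertion `j` whose splice is `w` again (up to rotation). -/
theorem subEscher_splices_back (U : Finset ℝ) (n k : ℕ) (hn : 1 ≤ n) (hk : 1 ≤ k)
    (w : ℕ → ℝ) (hw : IsEscher U (n + k) w) (i : ℕ)
    (hsub : w (i + k) < w (i + 1) + 1 ∧ w i < w (i + k + 1) + 1)
    (u v : ℕ → ℝ)
    (hu : ∀ j, u j = w (i + k + 1 + j % n))
    (hv : ∀ j, v j = w (i + 1 + j % k)) :
    IsEscher U n u ∧ IsEscher U k v ∧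
    ∃ j, (u j < v (j + 1) + 1 ∧ v j < u (j + 1) + 1) ∧
      ∃ t, ∀ a < n + k,
        (if a < n then u (j + 1 + a) else v (j + 1 + (a - n))) = w (t + a) := by
  obtain ⟨hper, hmem, hinj, harr⟩ := hw
  have hper' : ∀ a, w a = w (a % (n + k)) := by
    intro a
    conv_lhs => rw [← Nat.div_add_mod a (n + k)]
    generalize a / (n + k) = q
    induction q with
    | zero => simp
    | succ q ih =>
      have e : (n + k) * (q + 1) + a % (n + k) = ((n + k) * q + a % (n + k)) + (n + k) := by
        ring
      rw [e, hper, ih]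
  have hcong : ∀ a b, w a = w b → a % (n + k) = b % (n + k) := by
    intro a b h
    exact hinj _ _ (Nat.mod_lt _ (by omega)) (Nat.mod_lt _ (by omega))
      (by rw [← hper' a, ← hper' b, h])
  have hinj' : ∀ c a b, a < n + k → b < n + k → w (c + a) = w (c + b) → a = b := by
    intro c a b ha hb h
    have h1 : (c + a) % (n + k) = (c + b) % (n + k) := hcong _ _ h
    have h2 : a % (n + k) = b % (n + k) := Nat.ModEq.add_left_cancel' c h1
    rwa [Nat.mod_eq_of_lt ha, Nat.mod_eq_of_lt hb] at h2
  have hue : IsEscher U n u := by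
    refine aux_escher hn hmem harr ?_ (fun a b ha hb => hinj' _ a b (by omega) (by omega)) u hu
    rw [show i + k + 1 + (n - 1) = i + (n + k) from by omega, hper]
    exact hsub.2
  have hve : IsEscher U k v := by
    refine aux_escher hk hmem harr ?_ (fun a b ha hb => hinj' _ a b (by omega) (by omega)) v hv
    rw [show i + 1 + (k - 1) = i + k from by omega]
    exact hsub.1
  have hnk : 1 ≤ n * k := Nat.mul_pos (by omega) (by omega)
  have hsn : n * k - 1 + 1 = n * k := by omega
  have hn0 : (n * k - 1 + 1) % n = 0 := by rw [hsn]; exact Nat.mul_mod_right n k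
  have hk0 : (n * k - 1 + 1) % k = 0 := by rw [hsn]; exact Nat.mul_mod_left n k
  have hjn : (n * k - 1) % n = n - 1 := mod_pred_of_succ_mod hn hn0
  have hjk : (n * k - 1) % k = k - 1 := mod_pred_of_succ_mod hk hk0
  have hmodn : ∀ b, (n * k - 1 + 1 + b) % n = b % n := by
    intro b
    rw [show n * k - 1 + 1 + b = n * k + b from by omega, Nat.mul_add_mod]
  have hmodk : ∀ b, (n * k - 1 + 1 + b) % k = b % k := by
    intro b
    rw [show n * k - 1 + 1 + b = n * k + b from by omega, Nat.mul_comm, Nat.mul_add_mod]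
  refine ⟨hue, hve, n * k - 1, ⟨?_, ?_⟩, i + k + 1, ?_⟩
  · rw [hu, hv, hjn, hk0,
      show i + k + 1 + (n - 1) = i + (n + k) from by omega, hper]
    simpa using harr i
  · rw [hv, hu, hjk, hn0,
      show i + 1 + (k - 1) = i + k from by omega]
    simpa using harr (i + k)
  · intro a ha
    split_ifs with h
    · rw [hu, hmodn, Nat.mod_eq_of_lt h]
    · rw [hv, hmodk, Nat.mod_eq_of_lt (show a - n < k from by omega),
        show i + k + 1 + a = i + 1 + (a - n) + (n + k) from by omega, hper]
end

section
/- Let (u, v) be an (n-Escher, k-Escher) pair with gcd(n,k) = 1, and let κ₁ and κ₂ be two consecutive valid insertions, with κ₁ after index j and κ₂ after index j + r where r ≤ n. Then the sequence u_j → u_{j+1} → ⋯ → u_{j+r} → v_{j+r+1} → ⋯ → v_{j+r+k} is not pure: it contains a valid k-subEscher. -/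
/-- Main proposition: if `κ₁` (after index `j`) and `κ₂` (after index `j + r`, `r ≤ n`)
are two consecutive valid insertions of an (`n`-Escher, `k`-Escher) pair `(u, v)` with
`gcd n k = 1`, then the sequence
`u j → u (j+1) → ⋯ → u (j+r) → v (j+r+1) → ⋯ → v (j+r+k)` is not pure:
it contains a valid `k`-subEscher. -/
theorem consecutive_insertions_not_pure (U : Finset ℝ) (n k : ℕ)
    (hk : 1 ≤ k) (hkn : k ≤ n) (hcop : Nat.gcd n k = 1)
    (u v : ℕ → ℝ) (hu : IsEscher U n u) (hv : IsEscher U k v)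
    (j r : ℕ) (hr : 1 ≤ r) (hrn : r ≤ n)
    (hins1 : u j < v (j + 1) + 1 ∧ v j < u (j + 1) + 1)
    (hins2 : u (j + r) < v (j + r + 1) + 1 ∧ v (j + r) < u (j + r + 1) + 1)
    (hconsec : ∀ t, j < t → t < j + r →
      ¬(u t < v (t + 1) + 1 ∧ v t < u (t + 1) + 1))
    (W : ℕ → ℝ) (hW : ∀ m, W m = if m ≤ r then u (j + m) else v (j + m)) :
    ∃ m, m < r ∧ (W (m + k) < W (m + 1) + 1 ∧ W m < W (m + k + 1) + 1) := by
  classical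
  obtain ⟨huP, huU, huI, huA⟩ := hu
  obtain ⟨hvP, hvU, hvI, hvA⟩ := hv
  by_contra hcon
  -- arrows along W
  have arr : ∀ m, W m < W (m + 1) + 1 := by
    intro m
    rcases lt_trichotomy m r with h | h | h
    · rw [hW m, hW (m + 1), if_pos (by omega), if_pos (by omega)]
      have e : j + (m + 1) = (j + m) + 1 := by omega
      rw [e]; exact huA (j + m)
    · subst h
      rw [hW m, hW (m + 1), if_pos le_rfl, if_neg (by omega)]
      have e : j + (m + 1) = j + m + 1 := by omega
      rw [e]; exact hins2.1
    · rw [hW m, hW (m + 1), if_neg (by omega), if_neg (by omega)]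
      have e : j + (m + 1) = (j + m) + 1 := by omega
      rw [e]; exact hvA (j + m)
  -- v periodicity and chains
  have vper : ∀ a c, v (a + k * c) = v a := by
    intro a c
    induction c with
    | zero => simp
    | succ c ih =>
      have e : a + k * (c + 1) = (a + k * c) + k := by ring
      rw [e, hvP (a + k * c), ih]
  have vstep : ∀ a s, v a ≤ v (a + s) + s := by
    intro a s
    induction s with
    | zero => simp
    | succ s ih =>
      have h1 := hvA (a + s)
      have e : a + (s + 1) = (a + s) + 1 := by omega
      rw [e]
      push_cast
      push_cast at ih
      linarith
  -- the dichotomy from the negated goal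
  have disj : ∀ m, m < r → (W (m + 1) + 1 ≤ W (m + k) ∨ W (m + k + 1) + 1 ≤ W m) := by
    intro m hm
    rcases le_or_gt (W (m + 1) + 1) (W (m + k)) with h1 | h1
    · exact Or.inl h1
    rcases le_or_gt (W (m + k + 1) + 1) (W m) with h2 | h2
    · exact Or.inr h2
    exact absurd ⟨m, hm, h1, h2⟩ hcon
  rcases disj 0 (by omega) with hA0 | hB0
  · -- All-A case
    have allA : ∀ m, m < r → W (m + 1) + 1 ≤ W (m + k) := by
      intro m
      induction m with
      | zero => intro _; simpa using hA0
      | succ m ih =>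
        intro hm
        have hAm := ih (by omega)
        rcases disj (m + 1) hm with h | hB
        · exact h
        · exfalso
          have h1 := arr (m + k)
          have h2 := arr (m + k + 1)
          have e : m + 1 + k + 1 = m + k + 1 + 1 := by omega
          rw [e] at hB
          linarith
    rcases Nat.lt_or_ge k 2 with hk1 | hk2
    · -- k = 1
      have hk1' : k = 1 := by omega
      subst hk1'
      have := hA0
      simp only [Nat.zero_add] at this
      linarith
    · -- k ≥ 2
      obtain ⟨K, hK⟩ : ∃ K, k = K + 2 := ⟨k - 2, by omega⟩
      have hP : ∃ t, r < 1 + t * (K + 1) := ⟨r, by nlinarith⟩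
      set T := Nat.find hP with hTdef
      have hT : r < 1 + T * (K + 1) := Nat.find_spec hP
      have hTmin : ∀ t, t < T → 1 + t * (K + 1) ≤ r := by
        intro t ht
        have := Nat.find_min hP ht
        omega
      have hT1 : 1 ≤ T := by
        by_contra h
        have hT0 : T = 0 := by omega
        rw [hT0] at hT
        omega
      have chain : ∀ t, t ≤ T → W 1 + (t : ℝ) ≤ W (1 + t * (K + 1)) := by
        intro t
        induction t with
        | zero => simp
        | succ t ih =>
          intro ht
          have h1 := ih (by omega)
          have hm : t * (K + 1) < r := by
            have := hTmin t (by omega)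
            omega
          have hA := allA (t * (K + 1)) hm
          have e1 : t * (K + 1) + 1 = 1 + t * (K + 1) := by omega
          have e2 : t * (K + 1) + k = 1 + (t + 1) * (K + 1) := by
            rw [hK]; ring
          rw [e1, e2] at hA
          push_cast
          linarith
      have hchain := chain T le_rfl
      set i := 1 + T * (K + 1) with hidef
      obtain ⟨T', hT'⟩ : ∃ T', T = T' + 1 := ⟨T - 1, by omega⟩
      set q := T' / k with hqdef
      set rem := T' % k with hremdef
      have hrem : T' = k * q + rem := (Nat.div_add_mod T' k).symm
      have hkc : i + rem = k * (1 + q * (K + 1) + rem) := by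
        have h1 : i = 1 + (T' + 1) * (K + 1) := by rw [hidef, hT']
        rw [h1, hrem, hK]; ring
      have hWi : W i = v (j + i) := by
        rw [hW i, if_neg (by omega)]
      have hv1 : v (j + i) ≤ v (j + i + rem) + rem := vstep (j + i) rem
      have hv2 : v (j + i + rem) = v j := by
        have := vper j (1 + q * (K + 1) + rem)
        have e : j + i + rem = j + k * (1 + q * (K + 1) + rem) := by omega
        rw [e, this]
      have hW1 : W 1 = u (j + 1) := by rw [hW 1, if_pos (by omega)]
      have hins1b : v j < W 1 + 1 := by rw [hW1]; exact hins1.2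
      have hremT : rem ≤ T' := Nat.mod_le _ _
      have hc1 : (T : ℝ) = (T' : ℝ) + 1 := by rw [hT']; push_cast; ring
      have hc2 : (rem : ℝ) ≤ (T' : ℝ) := by exact_mod_cast hremT
      rw [hWi] at hchain
      rw [hv2] at hv1
      linarith
  · -- All-B case
    have allB : ∀ m, m < r → W (m + k + 1) + 1 ≤ W m := by
      intro m
      induction m with
      | zero => intro _; simpa using hB0
      | succ m ih =>
        intro hm
        have hBm := ih (by omega)
        rcases disj (m + 1) hm with hA | h
        · exfalso
          have h1 := arr m
          have h2 := arr (m + 1)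
          have e : m + 1 + k = m + k + 1 := by omega
          rw [e] at hA
          have e2 : m + 1 + 1 = m + 2 := by omega
          rw [e2] at hA h2
          linarith
        · exact h
    have hP : ∃ t, r ≤ t * (k + 1) := ⟨r, by nlinarith⟩
    set T := Nat.find hP with hTdef
    have hT : r ≤ T * (k + 1) := Nat.find_spec hP
    have hTmin : ∀ t, t < T → t * (k + 1) < r := by
      intro t ht
      have := Nat.find_min hP ht
      omega
    have hT1 : 1 ≤ T := by
      by_contra h
      have hT0 : T = 0 := by omega
      rw [hT0] at hT
      omega
    have chain : ∀ t, t ≤ T → W (t * (k + 1)) + (t : ℝ) ≤ W 0 := by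
      intro t
      induction t with
      | zero => simp
      | succ t ih =>
        intro ht
        have h1 := ih (by omega)
        have hm : t * (k + 1) < r := hTmin t (by omega)
        have hB := allB (t * (k + 1)) hm
        have e : t * (k + 1) + k + 1 = (t + 1) * (k + 1) := by ring
        rw [e] at hB
        push_cast
        linarith
    have hchain := chain T le_rfl
    set g := T * (k + 1) with hgdef
    obtain ⟨T', hT'⟩ : ∃ T', T = T' + 1 := ⟨T - 1, by omega⟩
    set q := T' / k with hqdef
    set rem := T' % k with hremdef
    have hrem : T' = k * q + rem := (Nat.div_add_mod T' k).symm
    have hkc : g = 1 + rem + k * (k * q + rem + 1 + q) := by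
      have h1 : g = (T' + 1) * (k + 1) := by rw [hgdef, hT']
      rw [h1, hrem]; ring
    have hW0 : W 0 = u j := by rw [hW 0, if_pos (by omega)]; norm_num
    have hins1a : W 0 < v (j + 1) + 1 := by rw [hW0]; exact hins1.1
    have hv1 : v (j + 1) ≤ v (j + 1 + rem) + rem := vstep (j + 1) rem
    have hremT : rem ≤ T' := Nat.mod_le _ _
    have hc1 : (T : ℝ) = (T' : ℝ) + 1 := by rw [hT']; push_cast; ring
    have hc2 : (rem : ℝ) ≤ (T' : ℝ) := by exact_mod_cast hremT
    rcases Nat.eq_or_lt_of_le hT with he | hgt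
    · -- g = r
      have hBr := allB (r - 1) (by omega)
      have e1 : r - 1 + k + 1 = r + k := by omega
      rw [e1] at hBr
      have harr := arr (r - 1)
      have e2 : r - 1 + 1 = r := by omega
      rw [e2] at harr
      have hWrk : W (r + k) = v (j + r + k) := by
        rw [hW (r + k), if_neg (by omega)]
        congr 1
        omega
      have hvrk : v (j + r + k) = v (j + r) := by
        have := vper (j + r) 1
        simpa using this
      have hv2 : v (j + 1 + rem) = v (j + r) := by
        have := vper (j + 1 + rem) (k * q + rem + 1 + q)
        have e : j + r = j + 1 + rem + k * (k * q + rem + 1 + q) := by omega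
        rw [e, this]
      rw [← he] at hchain
      rw [hWrk, hvrk] at hBr
      rw [hv2] at hv1
      linarith
    · -- g > r
      have hWg : W g = v (j + g) := by
        rw [hW g, if_neg (by omega)]
      have hv2 : v (j + 1 + rem) = v (j + g) := by
        have := vper (j + 1 + rem) (k * q + rem + 1 + q)
        have e : j + g = j + 1 + rem + k * (k * q + rem + 1 + q) := by omega
        rw [e, this]
      rw [hWg] at hchain
      rw [hv2] at hv1
      linarith
end

section
/- A pure⁻ sequence u_0 → u_1 → ⋯ → u_r → v_{r+1} → ⋯ → v_{r+k} arising from two consecutive valid insertions of an (n-Escher, k-Escher) pair yields the chain u_1 ≺ u_k ≺ u_{2(k−1)+1} ≺ ⋯ ≺ u_{(q−1)(k−1)+1} ≺ v_{q(k−1)+1} → v_{q(k−1)+2} → ⋯ → v_{qk} = v_0 → u_1, which is a contradictory cyclic chain (q occurrences of ≺ and q of →). -/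
/-- The pure⁻ case is contradictory: if the sequence
`u 0 → u 1 → ⋯ → u r → v (r+1) → ⋯ → v (r+k)` arising from a valid insertion at index
`0` of an (`n`-Escher, `k`-Escher) pair is pure⁻ (i.e. `W (m+1) ≺ W (m+k)` for every `m`
in range), then one obtains the contradictory cyclic chain
`u 1 ≺ u k ≺ u (2(k-1)+1) ≺ ⋯ ≺ u ((q-1)(k-1)+1) ≺ v (q(k-1)+1) → ⋯ → v (qk) = v 0 → u 1`
with `q` occurrences of `≺` and `q` of `→`; hence `False`. -/
theorem pure_minus_contradiction (U : Finset ℝ) (n k r : ℕ)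
    (hk : 1 ≤ k) (hkn : k ≤ n) (hr : 1 ≤ r) (hrn : r ≤ n)
    (u v : ℕ → ℝ) (hu : IsEscher U n u) (hv : IsEscher U k v)
    (hins : u 0 < v 1 + 1 ∧ v 0 < u 1 + 1)
    (W : ℕ → ℝ) (hW : ∀ m, W m = if m ≤ r then u m else v m)
    (hpureminus : ∀ m, m + k + 1 ≤ r + k → W (m + 1) + 1 ≤ W (m + k)) :
    False := by
  obtain ⟨hvper, -, -, hvstep⟩ := hv
  -- the case k = 1 is immediate
  rcases Nat.lt_or_ge k 2 with hk1 | hk2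
  · have hk1 : k = 1 := by omega
    have := hpureminus 0 (by omega)
    rw [hk1] at this
    linarith
  -- weak chain for v : v i ≤ v (i + d) + d
  have chain : ∀ i d : ℕ, v i ≤ v (i + d) + d := by
    intro i d
    induction d with
    | zero => simp
    | succ d ih =>
      have h := hvstep (i + d)
      have he : i + (d + 1) = i + d + 1 := by omega
      rw [he]
      push_cast
      linarith
  -- periodicity: v (t * k) = v 0
  have vper : ∀ t : ℕ, v (t * k) = v 0 := by
    intro t
    induction t with
    | zero => simp
    | succ t ih => rw [Nat.succ_mul, hvper, ih]
  -- q : least j with j*(k-1)+1 > r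
  have hPex : ∃ j, r < j * (k - 1) + 1 := ⟨r, by nlinarith [Nat.le_mul_of_pos_right r (show 0 < k - 1 by omega)]⟩
  set q := Nat.find hPex with hqdef
  have hq : r < q * (k - 1) + 1 := Nat.find_spec hPex
  have hlt : ∀ j < q, j * (k - 1) + 1 ≤ r := by
    intro j hj
    have := Nat.find_min hPex hj
    omega
  have hq1 : 1 ≤ q := by
    rcases Nat.eq_zero_or_pos q with h0 | h
    · rw [h0] at hq; simp at hq; omega
    · exact h
  -- main ascending chain
  have key : ∀ j, (∀ j' < j, j' * (k - 1) + 1 ≤ r) → u 1 + j ≤ W (j * (k - 1) + 1) := by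
    intro j
    induction j with
    | zero =>
      intro _
      rw [hW]
      simp [hr]
    | succ j ih =>
      intro h
      have h1 : j * (k - 1) + 1 ≤ r := h j (Nat.lt_succ_self j)
      have pm := hpureminus (j * (k - 1)) (by omega)
      have hidx : j * (k - 1) + k = (j + 1) * (k - 1) + 1 := by
        rw [add_mul, one_mul]; omega
      rw [hidx] at pm
      have ih' := ih (fun j' hj' => h j' (Nat.lt_succ_of_lt hj'))
      push_cast
      push_cast at ih'
      linarith
  have h1 := key q hlt
  rw [hW] at h1
  rw [if_neg (by omega)] at h1
  have h2 := chain (q * (k - 1) + 1) (q - 1)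
  have hidx2 : q * (k - 1) + 1 + (q - 1) = q * k := by
    have : q * k = q * (k - 1) + q := by
      rw [Nat.mul_sub, mul_one]
      have : q ≤ q * k := Nat.le_mul_of_pos_right q (by omega)
      omega
    omega
  rw [hidx2, vper q] at h2
  have h3 := hins.2
  have hc : ((q - 1 : ℕ) : ℝ) = (q : ℝ) - 1 := by
    push_cast [Nat.cast_sub hq1]; ring
  rw [hc] at h2
  linarith
end
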